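/- Let F = F_2[x]/(x^4+x+1), a field of order 16, and let α, β, γ, δ ∈ F form a basis over F_2. The graph on vertex set F with u ~ v iff (u-v = α and u,v ∈ span(α,γ,δ)) or (u-v = β) or (u-v = γ) or (u-v = δ and u,v ∉ span(α,β,δ)) is isomorphic to P_4 □ P_4. -/

import Mathlib

set_option maxHeartbeats 1000000
open SimpleGraph Polynomial

instance : DecidableRel (pathGraph 4).Adj := fun u v =>
  decidable_of_iff _ (pathGraph_adj).symm

instance : DecidableRel (pathGraph 4 □ pathGraph 4).Adj := fun u v =>
  decidable_of_iff _ (boxProd_adj).symm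

/-- The grid placement map on coordinates. -/
def gridMap (f : Fin 4 → ZMod 2) : Fin 4 × Fin 4 :=
  (![0, 3, 1, 2] ⟨2 * (f 2).val + (f 3).val, by
      have h2 := ZMod.val_lt (f 2); have h3 := ZMod.val_lt (f 3); omega⟩,
   ![1, 0, 2, 3] ⟨2 * (f 0).val + (f 1).val, by
      have h2 := ZMod.val_lt (f 0); have h3 := ZMod.val_lt (f 1); omega⟩)

lemma gridMap_bij : Function.Bijective gridMap := by decide

theorem diff_graph_iso_grid4
    (α β γ δ : AdjoinRoot (X ^ 4 + X + 1 : (ZMod 2)[X]))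
    (hind : LinearIndependent (ZMod 2) ![α, β, γ, δ])
    (hspan : Submodule.span (ZMod 2) {α, β, γ, δ} = ⊤) :
    Nonempty
      ((SimpleGraph.fromRel
          (fun u v : AdjoinRoot (X ^ 4 + X + 1 : (ZMod 2)[X]) =>
            (u - v = α ∧ u ∈ Submodule.span (ZMod 2) {α, γ, δ} ∧
                v ∈ Submodule.span (ZMod 2) {α, γ, δ}) ∨
            u - v = β ∨ u - v = γ ∨
            (u - v = δ ∧ u ∉ Submodule.span (ZMod 2) {α, β, δ} ∧
                v ∉ Submodule.span (ZMod 2) {α, β, δ}))) ≃g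
        (pathGraph 4 □ pathGraph 4)) := by
  have hrange : Set.range ![α, β, γ, δ] = {α, β, γ, δ} := by
    ext x
    simp [Fin.exists_fin_succ, Matrix.cons_val_zero, Matrix.cons_val_succ]
    tauto
  have hsp : ⊤ ≤ Submodule.span (ZMod 2) (Set.range ![α, β, γ, δ]) := by
    rw [hrange, hspan]
  let b : Module.Basis (Fin 4) (ZMod 2) (AdjoinRoot (X ^ 4 + X + 1 : (ZMod 2)[X])) :=
    Module.Basis.mk hind hsp
  let e := b.equivFun
  have hb : ∀ i, b i = ![α, β, γ, δ] i := fun i => Module.Basis.mk_apply hind hsp i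
  have he : ∀ i, e (![α, β, γ, δ] i) = fun j => if i = j then 1 else 0 := by
    intro i; ext j; rw [← hb i]; exact Module.Basis.equivFun_self b i j
  have hα := he 0; have hβ := he 1; have hγ := he 2; have hδ := he 3
  simp only [Matrix.cons_val_zero, Matrix.cons_val_one, Matrix.head_cons,
    Matrix.cons_val_two, Matrix.tail_cons, Matrix.cons_val_three] at hα hβ hγ hδ
  have hsub : ∀ u v w : AdjoinRoot (X ^ 4 + X + 1 : (ZMod 2)[X]),
      u - v = w ↔ e u - e v = e w := by
    intro u v w
    rw [← map_sub]
    exact ⟨fun h => by rw [h], fun h => e.injective h⟩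
  have hmem : ∀ (u : AdjoinRoot (X ^ 4 + X + 1 : (ZMod 2)[X])) (s : Set (Fin 4)),
      u ∈ Submodule.span (ZMod 2) (b '' s) ↔ ↑(b.repr u).support ⊆ s :=
    fun u s => b.mem_span_image
  have hmem1 : ∀ u : AdjoinRoot (X ^ 4 + X + 1 : (ZMod 2)[X]),
      u ∈ Submodule.span (ZMod 2) {α, γ, δ} ↔ e u 1 = 0 := by
    intro u
    have himg : b '' {0, 2, 3} = {α, γ, δ} := by
      rw [Set.image_insert_eq, Set.image_insert_eq, Set.image_singleton,
        hb 0, hb 2, hb 3]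
      simp
    rw [← himg, hmem u]
    constructor
    · intro h
      by_contra hne
      have : (1 : Fin 4) ∈ (b.repr u).support := Finsupp.mem_support_iff.2 (by
        rwa [Module.Basis.equivFun_apply] at hne)
      have := h this
      simp at this
    · intro h j hj
      have hje : (b.repr u) j ≠ 0 := Finsupp.mem_support_iff.1 hj
      have hj1 : j ≠ 1 := by
        rintro rfl
        exact hje (by rwa [Module.Basis.equivFun_apply] at h)
      fin_cases j <;> simp_all
  have hmem2 : ∀ u : AdjoinRoot (X ^ 4 + X + 1 : (ZMod 2)[X]),
      u ∈ Submodule.span (ZMod 2) {α, β, δ} ↔ e u 2 = 0 := by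
    intro u
    have himg : b '' {0, 1, 3} = {α, β, δ} := by
      rw [Set.image_insert_eq, Set.image_insert_eq, Set.image_singleton,
        hb 0, hb 1, hb 3]
      simp
    rw [← himg, hmem u]
    constructor
    · intro h
      by_contra hne
      have : (2 : Fin 4) ∈ (b.repr u).support := Finsupp.mem_support_iff.2 (by
        rwa [Module.Basis.equivFun_apply] at hne)
      have := h this
      simp at this
    · intro h j hj
      have hje : (b.repr u) j ≠ 0 := Finsupp.mem_support_iff.1 hj
      have hj2 : j ≠ 2 := by
        rintro rfl
        exact hje (by rwa [Module.Basis.equivFun_apply] at h)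
      fin_cases j <;> simp_all
  have hne : ∀ u v : AdjoinRoot (X ^ 4 + X + 1 : (ZMod 2)[X]),
      u ≠ v ↔ e u ≠ e v := fun u v => (e.injective.ne_iff).symm
  let gE : (Fin 4 → ZMod 2) ≃ Fin 4 × Fin 4 := Equiv.ofBijective gridMap gridMap_bij
  refine ⟨⟨e.toEquiv.trans gE, ?_⟩⟩
  intro u v
  simp only [Equiv.trans_apply, LinearEquiv.coe_toEquiv, fromRel_adj]
  rw [hne, hsub u v α, hsub u v β, hsub u v γ, hsub u v δ,
    hsub v u α, hsub v u β, hsub v u γ, hsub v u δ,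
    hmem1 u, hmem1 v, hmem2 u, hmem2 v, hα, hβ, hγ, hδ]
  have hgE : ∀ p : Fin 4 → ZMod 2, gE p = gridMap p := fun _ => rfl
  rw [hgE, hgE]
  generalize e u = p
  generalize e v = q
  revert p q
  decide
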